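/- Let n ≥ 1 and let b1, ..., bn be nonzero integers. The vector (b1, ..., bn) is regular if and only if some nonempty subset of {b1, ..., bn} sums to 0. -/

import Mathlib

open Combinatorics Finset


lemma gallai_bounded (S : Finset ℕ) (c : ℕ) :
    ∃ N : ℕ, 0 < N ∧ ∀ χ : ℕ → Fin c, ∃ a y : ℕ, 0 < a ∧ a ≤ N ∧ y ≤ N ∧
      ∀ s ∈ S, ∀ s' ∈ S, χ (a * s + y) = χ (a * s' + y) := by
  classical
  obtain ⟨ι, _inst, hι⟩ := Line.exists_mono_in_high_dimension S (Fin c)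
  refine ⟨Fintype.card ι * (S.sup id + 1) + 1, by positivity, fun χ => ?_⟩
  obtain ⟨l, k, hl⟩ := hι fun v => χ (∑ i, (v i : ℕ))
  set s : Finset ι := Finset.univ.filter (fun i => l.idxFun i = none) with hs
  set a := s.card with ha
  set y := ∑ i ∈ sᶜ, ((l.idxFun i).map (fun (m : S) => (m : ℕ))).getD 0 with hy
  have key : ∀ x : S, (∑ i, ((l x) i : ℕ)) = a * (x : ℕ) + y := by
    intro x
    rw [← Finset.sum_add_sum_compl s]
    congr 1
    · have hterm : ∀ i ∈ s, (((l.idxFun i).getD x : S) : ℕ) = (x : ℕ) := by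
        intro i hi
        rw [hs, Finset.mem_filter] at hi
        rw [hi.right]
        rfl
      rw [Finset.sum_congr rfl (show ∀ i ∈ s, (((l x) i : S) : ℕ) = (x : ℕ) from hterm), Finset.sum_const, smul_eq_mul]
    · apply Finset.sum_congr rfl
      intro i hi
      rw [hs, Finset.compl_filter, Finset.mem_filter] at hi
      obtain ⟨z, hz⟩ := Option.ne_none_iff_exists.mp hi.right
      show (((l.idxFun i).getD x : S) : ℕ) = _
      rw [← hz]
      rfl
  have ha1 : 0 < a := Finset.card_pos.mpr ⟨l.proper.choose, by
    rw [hs, Finset.mem_filter]; exact ⟨Finset.mem_univ _, l.proper.choose_spec⟩⟩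
  have ha2 : a ≤ Fintype.card ι := by
    calc a ≤ Finset.univ.card := Finset.card_le_card (Finset.filter_subset _ _)
    _ = Fintype.card ι := Finset.card_univ
  have hy2 : y ≤ Fintype.card ι * S.sup id := by
    calc y ≤ ∑ _i ∈ sᶜ, S.sup id := by
          apply Finset.sum_le_sum
          intro i _
          cases h : l.idxFun i with
          | none => simp
          | some z => simpa using Finset.le_sup (f := id) z.2
      _ = sᶜ.card * S.sup id := by rw [Finset.sum_const, smul_eq_mul]
      _ ≤ Fintype.card ι * S.sup id := by
          exact Nat.mul_le_mul_right _ (le_trans (Finset.card_le_card (Finset.subset_univ _)) Finset.card_univ.le)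
  refine ⟨a, y, ha1, by nlinarith, by nlinarith, fun u hu u' hu' => ?_⟩
  have h1 := hl ⟨u, hu⟩
  have h2 := hl ⟨u', hu'⟩
  simp only at h1 h2
  rw [key ⟨u, hu⟩] at h1
  rw [key ⟨u', hu'⟩] at h2
  rw [h1, h2]

lemma brauer (B C : ℕ) (hB : 0 < B) (c : ℕ) : ∃ N : ℕ, ∀ χ : ℕ → Fin c,
    ∃ x t : ℕ, 0 < x ∧ 0 < t ∧ x ≤ N ∧ t ≤ N ∧ χ x = χ (x + C * t) ∧ χ x = χ (B * t) := by
  induction c with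
  | zero => exact ⟨1, fun χ => ((χ 1).elim0)⟩
  | succ c ih =>
    obtain ⟨Nc, hNc⟩ := ih
    set J : ℕ := Nc * (1 + C + B) + 1 with hJ
    set M : ℕ := C * J + 1 with hM
    obtain ⟨Ng, hNg0, hNg⟩ := gallai_bounded (Finset.range (M + 1)) (c + 1)
    refine ⟨Ng * (B * Nc + J + 2) + 2 * Ng, fun χ => ?_⟩
    obtain ⟨a, y, ha, haN, hyN, hmono⟩ := hNg χ
    by_cases hcase : ∃ j, 1 ≤ j ∧ j ≤ J ∧ χ (B * (a * j)) = χ (a * 1 + y)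
    · obtain ⟨j, hj1, hjJ, hjc⟩ := hcase
      have bx : a * 1 + y ≤ Ng * (B * Nc + J + 2) + 2 * Ng := by
        have : a * 1 + y ≤ 2 * Ng := by omega
        omega
      have bt : a * j ≤ Ng * (B * Nc + J + 2) + 2 * Ng := by
        have h1 : a * j ≤ Ng * J := Nat.mul_le_mul haN hjJ
        have h2 : Ng * J ≤ Ng * (B * Nc + J + 2) := Nat.mul_le_mul_left _ (by omega)
        omega
      refine ⟨a * 1 + y, a * j, by positivity, by positivity, bx, bt, ?_, hjc.symm⟩
      have h1M : 1 ∈ Finset.range (M + 1) := by rw [Finset.mem_range]; omega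
      have h2M : 1 + C * j ∈ Finset.range (M + 1) := by
        rw [Finset.mem_range, hM]
        have : C * j ≤ C * J := Nat.mul_le_mul_left _ hjJ
        omega
      have := hmono 1 h1M (1 + C * j) h2M
      rw [this]
      ring_nf
    · push_neg at hcase
      set k := χ (a * 1 + y) with hk
      have hc0 : 0 < c := by
        by_contra hc
        have hc' : c = 0 := by omega
        subst hc'
        refine hcase 1 le_rfl (by omega) (Fin.ext ?_)
        have h1 := (χ (B * (a * 1))).isLt
        have h2 := (χ (a * 1 + y)).isLt
        omega
      set g : Fin (c + 1) → Fin c := fun v =>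
        if h : (v : ℕ) < (k : ℕ) then ⟨v, by omega⟩
        else if h2 : (v : ℕ) = (k : ℕ) then ⟨0, hc0⟩
        else ⟨(v : ℕ) - 1, by have := v.isLt; omega⟩ with hg
      have ginj : ∀ v w : Fin (c + 1), v ≠ k → w ≠ k → g v = g w → v = w := by
        intro v w hv hw h
        have hv' : (v : ℕ) ≠ (k : ℕ) := fun hh => hv (Fin.ext hh)
        have hw' : (w : ℕ) ≠ (k : ℕ) := fun hh => hw (Fin.ext hh)
        have hvlt := v.isLt
        have hwlt := w.isLt
        apply Fin.ext
        simp only [hg] at h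
        split_ifs at h <;> simp only [Fin.mk.injEq] at h <;> omega
      obtain ⟨x', t', hx', ht', hx'N, ht'N, h1, h2⟩ := hNc fun j => g (χ (B * (a * j)))
      have hb1 : x' ≤ J := by nlinarith
      have hb2 : x' + C * t' ≤ J := by nlinarith
      have hb3 : B * t' ≤ J := by nlinarith
      have ne1 : χ (B * (a * x')) ≠ k := hcase x' hx' hb1
      have ne2 : χ (B * (a * (x' + C * t'))) ≠ k := hcase _ (by omega) hb2
      have hBt' : 1 ≤ B * t' := by
        have := Nat.mul_le_mul hB ht'
        omega
      have ne3 : χ (B * (a * (B * t'))) ≠ k := hcase _ hBt' hb3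
      have e1 : χ (B * (a * x')) = χ (B * (a * (x' + C * t'))) := ginj _ _ ne1 ne2 h1
      have e2 : χ (B * (a * x')) = χ (B * (a * (B * t'))) := ginj _ _ ne1 ne3 h2
      have bnd : ∀ w, w ≤ Nc → B * (a * w) ≤ Ng * (B * Nc + J + 2) + 2 * Ng := by
        intro w hw
        have h1 : B * (a * w) ≤ B * (Ng * Nc) := Nat.mul_le_mul_left _ (Nat.mul_le_mul haN hw)
        have h2 : B * (Ng * Nc) = Ng * (B * Nc) := by ring
        have h3 : Ng * (B * Nc) ≤ Ng * (B * Nc + J + 2) := Nat.mul_le_mul_left _ (by omega)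
        omega
      refine ⟨B * (a * x'), B * (a * t'), by positivity, by positivity, bnd _ hx'N, bnd _ ht'N, ?_, ?_⟩
      · have : B * (a * x') + C * (B * (a * t')) = B * (a * (x' + C * t')) := by ring
        rw [this]; exact e1
      · have : B * (B * (a * t')) = B * (a * (B * t')) := by ring
        rw [this]; exact e2

lemma easy_dir (n : ℕ) (b : Fin n → ℤ) (S : Finset (Fin n)) (hne : S.Nonempty)
    (hsum : ∑ i ∈ S, b i = 0) (hb : ∀ i, b i ≠ 0) :
    ∀ c : ℕ, ∀ COL : ℕ+ → Fin c,
      ∃ e : Fin n → ℕ+,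
        (∀ i j, COL (e i) = COL (e j)) ∧
        ∑ i, b i * (e i : ℤ) = 0 := by
  classical
  intro c COL
  obtain ⟨i₀, hi₀⟩ := hne
  set a : ℤ := ∑ i ∈ Sᶜ, b i with hadef
  set B : ℕ := (b i₀).natAbs with hBdef
  have hB : 0 < B := Int.natAbs_pos.mpr (hb i₀)
  set cI : ℤ := if 0 < b i₀ then -a else a with hcI
  have key : b i₀ * cI = -a * (B : ℤ) := by
    rcases lt_trichotomy (b i₀) 0 with h | h | h
    · have hcoe : ((B : ℕ) : ℤ) = -(b i₀) := by
        rw [hBdef]; exact Int.ofNat_natAbs_of_nonpos h.le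
      rw [hcI, if_neg (by omega), hcoe]
      ring
    · exact absurd h (hb i₀)
    · have hcoe : ((B : ℕ) : ℤ) = b i₀ := by
        rw [hBdef]; exact Int.natAbs_of_nonneg h.le
      rw [hcI, if_pos h, hcoe]
      ring
  set C : ℕ := cI.natAbs with hCdef
  obtain ⟨N, hN⟩ := brauer B C hB c
  set χ : ℕ → Fin c := fun m => if h : 0 < m then COL ⟨m, h⟩ else COL 1 with hχdef
  obtain ⟨x, t, hx0, ht0, _, _, hx1, hx2⟩ := hN χ
  have hχ : ∀ (m : ℕ) (hm : 0 < m), COL ⟨m, hm⟩ = χ m := by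
    intro m hm
    rw [hχdef]
    simp [hm]
  set y : ℕ := if 0 ≤ cI then x else x + C * t with hydef
  set z : ℕ := if 0 ≤ cI then x + C * t else x with hzdef
  have hy0 : 0 < y := by rw [hydef]; split <;> omega
  have hz0 : 0 < z := by rw [hzdef]; split <;> omega
  have hBt0 : 0 < B * t := by positivity
  have hsz : (z : ℤ) - (y : ℤ) = cI * (t : ℤ) := by
    by_cases h : 0 ≤ cI
    · have hC : (C : ℤ) = cI := by rw [hCdef]; exact Int.natAbs_of_nonneg h
      rw [hydef, hzdef, if_pos h, if_pos h]
      push_cast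
      rw [hC]
      ring
    · have hC : (C : ℤ) = -cI := by
        rw [hCdef]; exact Int.ofNat_natAbs_of_nonpos (by omega)
      rw [hydef, hzdef, if_neg h, if_neg h]
      push_cast
      rw [hC]
      ring
  have hcy : χ y = χ x := by rw [hydef]; split_ifs <;> first | rfl | exact hx1.symm
  have hcz : χ z = χ x := by rw [hzdef]; split_ifs <;> first | rfl | exact hx1.symm
  have hcBt : χ (B * t) = χ x := hx2.symm
  set e : Fin n → ℕ+ := fun i =>
    if i = i₀ then ⟨z, hz0⟩ else if i ∈ S then ⟨y, hy0⟩ else ⟨B * t, hBt0⟩ with hedef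
  have hcol : ∀ i, COL (e i) = χ x := by
    intro i
    simp only [hedef]
    by_cases h1 : i = i₀
    · erw [if_pos h1]
      rw [hχ z hz0]
      exact hcz
    · erw [if_neg h1]
      by_cases h2 : i ∈ S
      · erw [if_pos h2, hχ y hy0]; exact hcy
      · erw [if_neg h2, hχ _ hBt0]; exact hcBt
  refine ⟨e, fun i j => by rw [hcol i, hcol j], ?_⟩
  have hcompl : ∀ i ∈ Sᶜ, b i * ((e i : ℕ) : ℤ) = b i * ((B * t : ℕ) : ℤ) := by
    intro i hi
    rw [Finset.mem_compl] at hi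
    have h1 : i ≠ i₀ := fun h => hi (h ▸ hi₀)
    simp only [hedef]
    erw [if_neg h1, if_neg hi]
    rfl
  have herase : ∀ i ∈ S.erase i₀, b i * ((e i : ℕ) : ℤ) = b i * ((y : ℕ) : ℤ) := by
    intro i hi
    rw [Finset.mem_erase] at hi
    simp only [hedef]
    erw [if_neg hi.1, if_pos hi.2]
    rfl
  have hei₀ : ((e i₀ : ℕ) : ℤ) = (z : ℤ) := by simp only [hedef]; simp
  calc ∑ i, b i * ((e i : ℕ) : ℤ)
      = ∑ i ∈ Sᶜ, b i * ((e i : ℕ) : ℤ) + ∑ i ∈ S, b i * ((e i : ℕ) : ℤ) :=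
        (Finset.sum_compl_add_sum S _).symm
    _ = ∑ i ∈ Sᶜ, b i * ((B * t : ℕ) : ℤ) +
        (b i₀ * ((e i₀ : ℕ) : ℤ) + ∑ i ∈ S.erase i₀, b i * ((e i : ℕ) : ℤ)) := by
        rw [Finset.sum_congr rfl hcompl, ← Finset.add_sum_erase S (fun i => b i * ((e i : ℕ) : ℤ)) hi₀]
    _ = (∑ i ∈ Sᶜ, b i) * ((B * t : ℕ) : ℤ) +
        (b i₀ * (z : ℤ) + (∑ i ∈ S.erase i₀, b i) * ((y : ℕ) : ℤ)) := by
        rw [Finset.sum_congr rfl herase, hei₀, Finset.sum_mul, Finset.sum_mul]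
    _ = a * ((B * t : ℕ) : ℤ) + (b i₀ * (z : ℤ) + (0 - b i₀) * (y : ℤ)) := by
        rw [← hadef, Finset.sum_erase_eq_sub hi₀, hsum]
    _ = 0 := by
        push_cast
        linear_combination (t : ℤ) * key + b i₀ * hsz

lemma hard_dir (n : ℕ) (hn : 1 ≤ n) (b : Fin n → ℤ) (hb : ∀ i, b i ≠ 0)
    (hreg : ∀ c : ℕ, ∀ COL : ℕ+ → Fin c,
      ∃ e : Fin n → ℕ+,
        (∀ i j, COL (e i) = COL (e j)) ∧
        ∑ i, b i * (e i : ℤ) = 0) :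
    ∃ S : Finset (Fin n), S.Nonempty ∧ ∑ i ∈ S, b i = 0 := by
  classical
  by_contra hcon
  push_neg at hcon
  obtain ⟨p, hple, hp⟩ := Nat.exists_infinite_primes (∑ i, (b i).natAbs + 1)
  haveI : Fact p.Prime := ⟨hp⟩
  set COL : ℕ+ → Fin p := fun x =>
    ⟨((x : ℕ) / p ^ (padicValNat p x)) % p, Nat.mod_lt _ hp.pos⟩ with hCOL
  obtain ⟨e, hcolor, hsum0⟩ := hreg p COL
  set v : Fin n → ℕ := fun i => padicValNat p (e i) with hv
  set u : Fin n → ℕ := fun i => (e i : ℕ) / p ^ (v i) with hu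
  have hepos : ∀ i, (e i : ℕ) ≠ 0 := fun i => (e i).ne_zero
  have hfac : ∀ i, (e i : ℕ) = p ^ (v i) * u i := by
    intro i
    rw [hu, Nat.mul_div_cancel' pow_padicValNat_dvd]
  have hnd : ∀ i, ¬ p ∣ u i := by
    intro i
    have h1 : (e i : ℕ).factorization p = padicValNat p (e i) :=
      Nat.factorization_def _ hp
    have := Nat.not_dvd_ordCompl hp (hepos i)
    rwa [h1] at this
  have hne : (Finset.univ : Finset (Fin n)).Nonempty := ⟨⟨0, hn⟩, Finset.mem_univ _⟩
  set m := Finset.univ.inf' hne v with hm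
  set T := Finset.univ.filter (fun i => v i = m) with hT
  have hTne : T.Nonempty := by
    obtain ⟨i, _, hi⟩ := Finset.exists_mem_eq_inf' hne v
    exact ⟨i, Finset.mem_filter.mpr ⟨Finset.mem_univ _, hi.symm⟩⟩
  have hmin : ∀ i, m ≤ v i := fun i => Finset.inf'_le v (Finset.mem_univ i)
  obtain ⟨i₀, hi₀⟩ := hTne
  set d := u i₀ % p with hd
  have hdlt : d < p := Nat.mod_lt _ hp.pos
  have hd0 : d ≠ 0 := by
    intro h
    exact hnd i₀ (Nat.dvd_of_mod_eq_zero (hd ▸ h))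
  have hmodd : ∀ i ∈ T, u i % p = d := by
    intro i _
    have := hcolor i i₀
    rw [hCOL] at this
    simpa [hu, hv] using (Fin.mk.injEq _ _ _ _).mp this
  -- sum over T equals p^m * W
  set W : ℤ := ∑ i ∈ T, b i * (u i : ℤ) with hW
  have h1 : ∑ i ∈ T, b i * ((e i : ℕ) : ℤ) = (p : ℤ) ^ m * W := by
    rw [hW, Finset.mul_sum]
    apply Finset.sum_congr rfl
    intro i hi
    have hvm : v i = m := (Finset.mem_filter.mp hi).2
    have := hfac i
    rw [this, hvm]
    push_cast
    ring
  have h2 : (p : ℤ) ^ (m + 1) ∣ ∑ i ∈ Tᶜ, b i * ((e i : ℕ) : ℤ) := by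
    apply Finset.dvd_sum
    intro i hi
    have hvm : v i ≠ m := by
      have h' : ¬ (i ∈ T) := Finset.mem_compl.mp hi
      rw [hT, Finset.mem_filter] at h'
      exact fun h => h' ⟨Finset.mem_univ _, h⟩
    have hge : m + 1 ≤ v i := by
      have := hmin i
      omega
    have hd1 : (p : ℕ) ^ (m + 1) ∣ (e i : ℕ) :=
      dvd_trans (pow_dvd_pow p hge) pow_padicValNat_dvd
    exact Dvd.dvd.mul_left (by exact_mod_cast Int.natCast_dvd_natCast.mpr hd1) _
  have h3 : (p : ℤ) ^ (m + 1) ∣ (p : ℤ) ^ m * W := by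
    rw [← h1]
    have := Finset.sum_compl_add_sum T (fun i => b i * ((e i : ℕ) : ℤ))
    have heq : ∑ i ∈ T, b i * ((e i : ℕ) : ℤ) = - ∑ i ∈ Tᶜ, b i * ((e i : ℕ) : ℤ) := by
      have h0 : ∑ i ∈ Tᶜ, b i * ((e i : ℕ) : ℤ) + ∑ i ∈ T, b i * ((e i : ℕ) : ℤ) = 0 := by
        rw [this]; exact hsum0
      linarith
    rw [heq]
    exact dvd_neg.mpr h2
  have hpW : (p : ℤ) ∣ W := by
    have hpm : ((p : ℤ) ^ m) ≠ 0 := (pow_pos (by exact_mod_cast hp.pos : (0:ℤ) < (p:ℤ)) m).ne'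
    rw [pow_succ] at h3
    exact (mul_dvd_mul_iff_left hpm).mp h3
  have hdiff : (p : ℤ) ∣ (∑ i ∈ T, b i) * (d : ℤ) - W := by
    rw [hW, Finset.sum_mul, ← Finset.sum_sub_distrib]
    apply Finset.dvd_sum
    intro i hi
    have : b i * (d : ℤ) - b i * (u i : ℤ) = b i * ((d : ℤ) - u i) := by ring
    rw [this]
    apply Dvd.dvd.mul_left
    have hmod := hmodd i hi
    have hdm : (u i : ℤ) - d = p * ((u i / p : ℕ) : ℤ) := by
      have hn1 : p * (u i / p) + d = u i := by
        have := Nat.div_add_mod (u i) p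
        omega
      have hn2 : (p : ℤ) * ((u i / p : ℕ) : ℤ) + (d : ℤ) = ((u i : ℕ) : ℤ) := by
        exact_mod_cast hn1
      linarith
    have : (d : ℤ) - u i = -(p * ((u i / p : ℕ) : ℤ)) := by linarith
    rw [this]
    exact dvd_neg.mpr (Dvd.intro _ rfl)
  have hpd : (p : ℤ) ∣ (∑ i ∈ T, b i) * (d : ℤ) := by
    have := dvd_add hdiff hpW
    simpa using this
  have hprime : Prime (p : ℤ) := Nat.prime_iff_prime_int.mp hp
  have hps : (p : ℤ) ∣ ∑ i ∈ T, b i := by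
    rcases hprime.dvd_mul.mp hpd with h | h
    · exact h
    · exfalso
      have : p ∣ d := Int.natCast_dvd_natCast.mp h
      have := Nat.le_of_dvd (Nat.pos_of_ne_zero hd0) this
      omega
  have habs : |∑ i ∈ T, b i| < (p : ℤ) := by
    calc |∑ i ∈ T, b i| ≤ ∑ i ∈ T, |b i| := Finset.abs_sum_le_sum_abs _ _
      _ ≤ ∑ i, |b i| := Finset.sum_le_sum_of_subset_of_nonneg (Finset.subset_univ _)
          (fun i _ _ => abs_nonneg _)
      _ = ((∑ i, (b i).natAbs : ℕ) : ℤ) := by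
          push_cast
          rfl
      _ < p := by exact_mod_cast (by omega : (∑ i, (b i).natAbs) < p)
  have hzero : ∑ i ∈ T, b i = 0 := by
    by_contra hz
    have := Int.le_of_dvd (abs_pos.mpr hz) ((dvd_abs _ _).mpr hps)
    omega
  exact hcon T ⟨i₀, hi₀⟩ hzero

/-- Rado's theorem for a single equation: a vector `b` of nonzero integers is
regular iff some nonempty subset of its entries sums to `0`. -/
theorem rado_single_equation (n : ℕ) (hn : 1 ≤ n) (b : Fin n → ℤ)
    (hb : ∀ i, b i ≠ 0) :
    (∀ c : ℕ, ∀ COL : ℕ+ → Fin c,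
      ∃ e : Fin n → ℕ+,
        (∀ i j, COL (e i) = COL (e j)) ∧
        ∑ i, b i * (e i : ℤ) = 0) ↔
    ∃ S : Finset (Fin n), S.Nonempty ∧ ∑ i ∈ S, b i = 0 := by
  constructor
  · exact hard_dir n hn b hb
  · rintro ⟨S, hne, hsum⟩
    exact easy_dir n b S hne hsum hb
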